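/- Let q be a prime power, n ≥ 2, r ≥ 2 even. Then U = {(x₁,…,x_{r/2}, x₁^q,…,x_{r/2}^q) : x_i ∈ 𝔽_{q^n}} is a scattered 𝔽_q-subspace of 𝔽_{q^n}^r of 𝔽_q-dimension rn/2. -/

import Mathlib

section Aux

/-- Fixed points of `x ↦ x^q` in `K` are exactly the image of `Fq`. -/
theorem fixed_mem_range_algebraMap (q : ℕ) (Fq K : Type*) [Field Fq] [Field K]
    [Fintype Fq] [Fintype K] [Algebra Fq K] (hq : Fintype.card Fq = q)
    (c : K) (hc : c ^ q = c) : c ∈ Set.range (algebraMap Fq K) := by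
  classical
  have hq2 : 2 ≤ q := hq ▸ Fintype.one_lt_card
  set S : Finset K := Finset.univ.filter (fun x => x ^ q = x) with hS
  have hmap : ∀ a : Fq, algebraMap Fq K a ∈ S := by
    intro a
    simp only [hS, Finset.mem_filter, Finset.mem_univ, true_and, ← map_pow]
    rw [← hq, FiniteField.pow_card]
  have hinj : Function.Injective (algebraMap Fq K) := (algebraMap Fq K).injective
  have hge : S.card ≤ q := by
    set P : Polynomial K := Polynomial.X ^ q - Polynomial.X with hP
    have hdeg : P.natDegree = q := by
      rw [hP, Polynomial.natDegree_sub_eq_left_of_natDegree_lt]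
      · exact Polynomial.natDegree_X_pow q
      · simpa [Polynomial.natDegree_X_pow] using (show 1 < q by omega)
    have hP0 : P ≠ 0 := fun h => by simp [h] at hdeg; omega
    have hsub : S ⊆ P.roots.toFinset := by
      intro x hx
      simp only [hS, Finset.mem_filter, Finset.mem_univ, true_and] at hx
      rw [Multiset.mem_toFinset, Polynomial.mem_roots hP0]
      simp [hP, Polynomial.IsRoot, hx]
    calc S.card ≤ P.roots.toFinset.card := Finset.card_le_card hsub
      _ ≤ Multiset.card P.roots := Multiset.toFinset_card_le _
      _ ≤ P.natDegree := Polynomial.card_roots' P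
      _ = q := hdeg
  have himg : Finset.image (fun a : Fq => algebraMap Fq K a) Finset.univ = S := by
    apply Finset.eq_of_subset_of_card_le
    · intro x hx
      obtain ⟨a, _, rfl⟩ := Finset.mem_image.1 hx
      exact hmap a
    · rw [Finset.card_image_of_injective _ hinj, Finset.card_univ, hq]
      exact hge
  have hcS : c ∈ S := by simp [hS, hc]
  rw [← himg, Finset.mem_image] at hcS
  obtain ⟨a, _, ha⟩ := hcS
  exact ⟨a, ha⟩

end Aux

/-- Lavrauw's example of a maximum scattered `𝔽_q`-subspace of `𝔽_{q^n}^r`,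
`r = 2m` even, of `𝔽_q`-dimension `rn/2`. -/
theorem lavrauw_scattered_subspace
    (q n r m : ℕ) (hn : 2 ≤ n) (hr2 : 2 ≤ r) (hrm : r = 2 * m)
    (Fq K : Type*) [Field Fq] [Field K] [Fintype Fq] [Fintype K] [Algebra Fq K]
    (hq : Fintype.card Fq = q) (hK : Fintype.card K = q ^ n)
    (U : Submodule Fq ((Fin m → K) × (Fin m → K)))
    (hU : (U : Set ((Fin m → K) × (Fin m → K)))
        = {p | ∃ x : Fin m → K, p = (x, fun i => x i ^ q)}) :
    Module.finrank Fq U = r * n / 2 ∧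
      ∀ v : (Fin m → K) × (Fin m → K), v ≠ 0 →
        Module.finrank Fq
          ↥(U ⊓ (Submodule.span K {v}).restrictScalars Fq) ≤ 1 := by
  classical
  have hq2 : 2 ≤ q := hq ▸ Fintype.one_lt_card
  -- characteristic bookkeeping
  set p := ringChar Fq with hpdef
  haveI hcharFq : CharP Fq p := ringChar.charP Fq
  obtain ⟨k, hp, hcard⟩ := FiniteField.card Fq p
  haveI : Fact p.Prime := ⟨hp⟩
  have hqp : q = p ^ (k : ℕ) := by rw [← hq, hcard]
  haveI hcharK : CharP K p := charP_of_injective_algebraMap (algebraMap Fq K).injective p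
  -- the `q`-power map on `K` is `Fq`-linear
  have hadd : ∀ a b : K, (a + b) ^ q = a ^ q + b ^ q := by
    intro a b; rw [hqp]; exact add_pow_char_pow a b p k
  have hsmul : ∀ (c : Fq) (a : K), (c • a) ^ q = c • a ^ q := by
    intro c a
    rw [Algebra.smul_def, Algebra.smul_def, mul_pow, ← map_pow, ← hq, FiniteField.pow_card]
  -- the linear map whose range is `U`
  let L : (Fin m → K) →ₗ[Fq] (Fin m → K) × (Fin m → K) :=
    { toFun := fun x => (x, fun i => x i ^ q)
      map_add' := by
        intro x y
        refine Prod.ext rfl ?_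
        funext i
        exact hadd (x i) (y i)
      map_smul' := by
        intro c x
        refine Prod.ext rfl ?_
        funext i
        exact hsmul c (x i) }
    -- range L = U
  have hrange : LinearMap.range L = U := by
    apply SetLike.coe_injective
    rw [hU]
    ext w
    constructor
    · rintro ⟨x, rfl⟩; exact ⟨x, rfl⟩
    · rintro ⟨x, rfl⟩; exact ⟨x, rfl⟩
  have hinjL : Function.Injective L := by
    intro x y hxy
    exact congrArg Prod.fst hxy
  have hnK : Module.finrank Fq K = n := by
    have hcardK : Fintype.card K = q ^ Module.finrank Fq K := by
      rw [← hq]; exact Module.card_eq_pow_finrank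
    rw [hK] at hcardK
    exact (Nat.pow_right_injective hq2 hcardK).symm
  constructor
  · -- dimension
    have e : (Fin m → K) ≃ₗ[Fq] LinearMap.range L := LinearEquiv.ofInjective L hinjL
    have h1 : Module.finrank Fq U = Module.finrank Fq (Fin m → K) := by
      rw [← hrange]; exact e.finrank_eq.symm
    have h2 : Module.finrank Fq (Fin m → K) = m * n := by
      rw [Module.finrank_pi_fintype, hnK]
      simp [Finset.sum_const, Finset.card_univ]
    rw [h1, h2, hrm, mul_assoc]
    exact (Nat.mul_div_cancel_left _ (by norm_num)).symm
  · -- scattered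
    intro v hv
    set W := U ⊓ (Submodule.span K {v}).restrictScalars Fq with hW
    by_cases hWbot : W = ⊥
    · rw [hWbot]
      simp
    · obtain ⟨u, huW, hu0⟩ := Submodule.exists_mem_ne_zero_of_ne_bot hWbot
      -- components of u
      have huU : u ∈ (U : Set _) := huW.1
      rw [hU] at huU
      obtain ⟨x, hx⟩ := huU
      have hx0 : x ≠ 0 := by
        rintro rfl
        apply hu0
        rw [hx]
        have hqne : q ≠ 0 := by omega
        ext i <;> simp [zero_pow hqne]
      obtain ⟨i₀, hi₀⟩ : ∃ i, x i ≠ 0 := by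
        by_contra h
        push_neg at h
        exact hx0 (funext h)
      obtain ⟨μ, hμ⟩ := Submodule.mem_span_singleton.1
        ((Submodule.restrictScalars_mem Fq _ u).1 huW.2)
      have hμ0 : μ ≠ 0 := by rintro rfl; rw [zero_smul] at hμ; exact hu0 hμ.symm
      -- W is contained in the Fq-span of u
      have hle : W ≤ Submodule.span Fq {u} := by
        intro w hwW
        have hwU : w ∈ (U : Set _) := hwW.1
        rw [hU] at hwU
        obtain ⟨y, hy⟩ := hwU
        obtain ⟨lam, hlam⟩ := Submodule.mem_span_singleton.1
          ((Submodule.restrictScalars_mem Fq _ w).1 hwW.2)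
        set c : K := lam * μ⁻¹ with hc
        have hwc : w = c • u := by
          rw [← hμ, ← hlam, smul_smul, hc]
          rw [mul_assoc, inv_mul_cancel₀ hμ0, mul_one]
        -- component equations
        have h1 : y = c • x := by
          have := congrArg Prod.fst hwc
          rw [hy, hx] at this
          simpa using this
        have h2 : (fun i => y i ^ q) = c • fun i => x i ^ q := by
          have := congrArg Prod.snd hwc
          rw [hy, hx] at this
          simpa using this
        have hcq : c ^ q = c := by
          have e1 : y i₀ = c * x i₀ := by rw [h1]; simp
          have e2 : y i₀ ^ q = c * x i₀ ^ q := by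
            have := congrFun h2 i₀
            simpa using this
          rw [e1, mul_pow] at e2
          have hxq : x i₀ ^ q ≠ 0 := pow_ne_zero _ hi₀
          exact mul_right_cancel₀ hxq e2
        obtain ⟨c', hc'⟩ := fixed_mem_range_algebraMap q Fq K hq c hcq
        refine Submodule.mem_span_singleton.2 ⟨c', ?_⟩
        rw [← hc', algebraMap_smul] at hwc
        exact hwc.symm
      calc Module.finrank Fq ↥W ≤ Module.finrank Fq ↥(Submodule.span Fq {u}) :=
            Submodule.finrank_mono hle
        _ = 1 := finrank_span_singleton hu0
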